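/- Let β be a cardinal with 1 < β ≤ α and let G be one of the Grassmannians G_β(V) or G^β(V). If g : A → A' is a special bijection between two apartments of G, then g is adjacency preserving in both directions: for all X, Y ∈ A, X and Y are adjacent if and only if g(X) and g(Y) are adjacent. -/

import Mathlib

/- Setting: `V` is a left vector space over a division ring `K` whose dimension
`α = Module.rank K V` is an infinite cardinal. -/

universe u v w

section Defs

variable (K : Type u) (V : Type v) [DivisionRing K] [AddCommGroup V] [Module K V]

/-- `B ⊆ V` is a basis of `V`, given as a set of vectors. -/
def IsBasisSet (B : Set V) : Prop :=
  LinearIndependent K ((↑) : B → V) ∧ Submodule.span K B = ⊤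

/-- The Grassmannian `G_β(V)`: all subspaces of dimension `β` and codimension `α`. -/
def Gsub (β : Cardinal.{v}) : Set (Submodule K V) :=
  {X | Module.rank K ↥X = β ∧ Module.rank K (V ⧸ X) = Module.rank K V}

/-- The Grassmannian `G^β(V)`: all subspaces of dimension `α` and codimension `β`. -/
def Gsup (β : Cardinal.{v}) : Set (Submodule K V) :=
  {X | Module.rank K ↥X = Module.rank K V ∧ Module.rank K (V ⧸ X) = β}

/-- The apartment of a Grassmannian `G` defined by a basis `B`:
all elements of `G` spanned by subsets of `B`. -/
def apartmentOf (G : Set (Submodule K V)) (B : Set V) : Set (Submodule K V) :=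
  {X | X ∈ G ∧ ∃ S ⊆ B, X = Submodule.span K S}

/-- `X` and `Y` are adjacent: `X ∩ Y` has codimension 1 in both `X` and `Y`,
i.e. `dim X/(X∩Y) = dim Y/(X∩Y) = 1`. -/
def AdjacentSub (X Y : Submodule K V) : Prop :=
  Module.rank K (↥X ⧸ Submodule.comap X.subtype (X ⊓ Y)) = 1 ∧
  Module.rank K (↥Y ⧸ Submodule.comap Y.subtype (X ⊓ Y)) = 1

/-- `A` is an apartment of the Grassmannian `G`. -/
def IsApartment (G : Set (Submodule K V)) (A : Set (Submodule K V)) : Prop :=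
  ∃ B : Set V, IsBasisSet K V B ∧ A = apartmentOf K V G B

/-- A subset `X` of an apartment `A` of `G` is inexact if some apartment of `G`
distinct from `A` contains it. -/
def Inexact (G : Set (Submodule K V)) (A X : Set (Submodule K V)) : Prop :=
  ∃ A' : Set (Submodule K V), IsApartment K V G A' ∧ A' ≠ A ∧ X ⊆ A'

end Defs

variable {K : Type u} {V : Type v} [DivisionRing K] [AddCommGroup V] [Module K V]

open Submodule Set Cardinal

section BasisLemmas

variable {B : Set V}

noncomputable def bas (hB : IsBasisSet K V B) : Module.Basis ↥B K V :=
  Module.Basis.mk hB.1 (by rw [Subtype.range_coe]; exact hB.2.ge)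

lemma bas_apply (hB : IsBasisSet K V B) (i : ↥B) : bas hB i = ↑i := by
  simp [bas]

lemma repr_basis (hB : IsBasisSet K V B) {x : V} (hx : x ∈ B) :
    (bas hB).repr x = Finsupp.single ⟨x, hx⟩ 1 := by
  conv_lhs => rw [show x = bas hB ⟨x, hx⟩ from (bas_apply hB ⟨x, hx⟩).symm]
  exact (bas hB).repr_self _

lemma mem_span_iff (hB : IsBasisSet K V B) {S : Set V} (hS : S ⊆ B) (x : V) :
    x ∈ Submodule.span K S ↔ ∀ i : ↥B, (bas hB).repr x i ≠ 0 → ↑i ∈ S := by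
  have himg : (bas hB) '' {i : ↥B | ↑i ∈ S} = S := by
    ext v
    constructor
    · rintro ⟨i, hi, rfl⟩
      rw [bas_apply]
      exact hi
    · intro hv
      exact ⟨⟨v, hS hv⟩, hv, bas_apply hB _⟩
  have key := Module.Basis.mem_span_image (b := bas hB) (m := x) (s := {i : ↥B | ↑i ∈ S})
  rw [himg] at key
  rw [key]
  constructor
  · intro h i hi
    exact h (Finsupp.mem_support_iff.2 hi)
  · intro h i hi
    exact h i (Finsupp.mem_support_iff.1 hi)

lemma basis_mem_span_iff (hB : IsBasisSet K V B) {S : Set V} (hS : S ⊆ B) {b : V} (hb : b ∈ B) :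
    b ∈ Submodule.span K S ↔ b ∈ S := by
  constructor
  · intro h
    rw [mem_span_iff hB hS] at h
    have hrepr : (bas hB).repr b = Finsupp.single ⟨b, hb⟩ 1 := by
      conv_lhs => rw [show b = bas hB ⟨b, hb⟩ from (bas_apply hB ⟨b, hb⟩).symm]
      exact (bas hB).repr_self _
    have := h ⟨b, hb⟩
    simp [hrepr] at this
    exact this
  · intro h
    exact Submodule.subset_span h

lemma span_injOn (hB : IsBasisSet K V B) {S T : Set V} (hS : S ⊆ B) (hT : T ⊆ B)
    (h : Submodule.span K S = Submodule.span K T) : S = T := by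
  ext v
  constructor
  · intro hv
    have : v ∈ Submodule.span K T := h ▸ Submodule.subset_span hv
    exact (basis_mem_span_iff hB hT (hS hv)).1 this
  · intro hv
    have : v ∈ Submodule.span K S := h ▸ Submodule.subset_span hv
    exact (basis_mem_span_iff hB hS (hT hv)).1 this

lemma span_inf (hB : IsBasisSet K V B) {S T : Set V} (hS : S ⊆ B) (hT : T ⊆ B) :
    Submodule.span K S ⊓ Submodule.span K T = Submodule.span K (S ∩ T) := by
  apply le_antisymm
  · intro x hx
    rw [Submodule.mem_inf, mem_span_iff hB hS, mem_span_iff hB hT] at hx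
    rw [mem_span_iff hB (fun y hy => hS hy.1)]
    exact fun i hi => ⟨hx.1 i hi, hx.2 i hi⟩
  · exact le_inf (Submodule.span_mono inter_subset_left)
      (Submodule.span_mono inter_subset_right)

lemma span_iInf (hB : IsBasisSet K V B) {ι : Type*} [Nonempty ι] {S : ι → Set V}
    (hS : ∀ i, S i ⊆ B) :
    (⨅ i, Submodule.span K (S i)) = Submodule.span K (⋂ i, S i) := by
  apply le_antisymm
  · intro x hx
    rw [Submodule.mem_iInf] at hx
    have hsub : (⋂ i, S i) ⊆ B := (Set.iInter_subset _ (Classical.arbitrary ι)).trans (hS _)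
    rw [mem_span_iff hB hsub]
    intro i hi
    rw [Set.mem_iInter]
    intro j
    exact (mem_span_iff hB (hS j) x).1 (hx j) i hi
  · exact le_iInf fun i => Submodule.span_mono (Set.iInter_subset _ i)

lemma rank_span_eq (hB : IsBasisSet K V B) {S : Set V} (hS : S ⊆ B) :
    Module.rank K ↥(Submodule.span K S) = #S :=
  rank_span_set ((show LinearIndepOn K id B from hB.1).mono hS)

lemma card_basis (hB : IsBasisSet K V B) : #B = Module.rank K V :=
  (bas hB).mk_eq_rank''

end BasisLemmas

section QuotLemmas

variable {B : Set V}

lemma span_quot_basis (hB : IsBasisSet K V B) {S : Set V} (hS : S ⊆ B) :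
    ∃ _ : Module.Basis ↥(B \ S : Set V) K (V ⧸ Submodule.span K S), True := by
  set W := Submodule.span K S
  have hind0 : LinearIndependent K ((↑) : ↥(B \ S : Set V) → V) := (show LinearIndepOn K id B from hB.1).mono diff_subset
  have hdisj : Disjoint (Submodule.span K (Set.range ((↑) : ↥(B \ S : Set V) → V)))
      (LinearMap.ker W.mkQ) := by
    rw [Subtype.range_coe, Submodule.ker_mkQ]
    rw [disjoint_iff, span_inf hB diff_subset hS]
    simp
  have hind : LinearIndependent K (fun i : ↥(B \ S : Set V) => W.mkQ ↑i) :=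
    hind0.map hdisj
  have hspan : ⊤ ≤ Submodule.span K (Set.range (fun i : ↥(B \ S : Set V) => W.mkQ ↑i)) := by
    have hr : Set.range (fun i : ↥(B \ S : Set V) => W.mkQ ↑i) = W.mkQ '' (B \ S) := by
      ext x; simp [Set.mem_image]
    rw [hr, ← Submodule.map_span]
    intro x _
    obtain ⟨y, rfl⟩ := W.mkQ_surjective x
    have hy : y ∈ Submodule.span K B := by rw [hB.2]; trivial
    rw [show B = (B \ S) ∪ S from (Set.diff_union_of_subset hS).symm, Submodule.span_union] at hy
    obtain ⟨a, ha, b, hb, rfl⟩ := Submodule.mem_sup.1 hy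
    have : W.mkQ (a + b) = W.mkQ a := by
      simp [map_add, (Submodule.Quotient.mk_eq_zero W).2 hb, Submodule.mkQ_apply]
    rw [this]
    exact Submodule.mem_map_of_mem ha
  exact ⟨Module.Basis.mk hind hspan, trivial⟩

lemma rank_quot_eq (hB : IsBasisSet K V B) {S : Set V} (hS : S ⊆ B) :
    Module.rank K (V ⧸ Submodule.span K S) = #(B \ S : Set V) := by
  obtain ⟨b, -⟩ := span_quot_basis hB hS
  exact b.mk_eq_rank''.symm

end QuotLemmas

lemma mk_set_eq_one_iff {s : Set V} : #s = 1 ↔ ∃ u, s = {u} := by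
  constructor
  · intro h
    have hne : Nonempty ↥s := Cardinal.mk_ne_zero_iff.1 (by rw [h]; exact one_ne_zero)
    obtain ⟨⟨u, hu⟩⟩ := hne
    have hss : s.Subsingleton := Cardinal.mk_le_one_iff_set_subsingleton.1 h.le
    exact ⟨u, Set.Subsingleton.eq_singleton_of_mem hss hu⟩
  · rintro ⟨u, rfl⟩
    exact Cardinal.mk_singleton u

section AdjDecode

variable {B : Set V}

lemma rank_quot_comap (hB : IsBasisSet K V B) {S T : Set V} (hS : S ⊆ B) (hT : T ⊆ B) :
    Module.rank K
      (↥(Submodule.span K S) ⧸ Submodule.comap (Submodule.span K S).subtype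
        (Submodule.span K S ⊓ Submodule.span K T)) = #(S \ T : Set V) := by
  set X := Submodule.span K S with hX
  set W := Submodule.span K (B \ (S \ T)) with hW
  have hBsub : B \ (S \ T) ⊆ B := Set.diff_subset
  set f : ↥X →ₗ[K] V ⧸ W := W.mkQ.comp X.subtype with hf
  have hset1 : S ∩ (B \ (S \ T)) = S ∩ T := by
    ext x
    simp only [Set.mem_inter_iff, Set.mem_diff, Set.mem_setOf_eq]
    constructor
    · rintro ⟨hxS, -, hx2⟩
      refine ⟨hxS, ?_⟩
      by_contra hxT
      exact hx2 ⟨hxS, hxT⟩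
    · rintro ⟨hxS, hxT⟩
      exact ⟨hxS, hS hxS, fun h => h.2 hxT⟩
  have hker : LinearMap.ker f = Submodule.comap X.subtype (X ⊓ Submodule.span K T) := by
    rw [hf, LinearMap.ker_comp, Submodule.ker_mkQ]
    ext x
    simp only [Submodule.mem_comap]
    have hx : (x : V) ∈ X := x.2
    have h1 : X ⊓ W = Submodule.span K (S ∩ T) := by
      rw [hX, hW, span_inf hB hS hBsub, hset1]
    have h2 : X ⊓ Submodule.span K T = Submodule.span K (S ∩ T) := span_inf hB hS hT
    constructor
    · intro hw
      rw [h2, ← h1]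
      exact ⟨hx, hw⟩
    · intro hw
      rw [h2, ← h1] at hw
      exact hw.2
  have hrange : LinearMap.range f = ⊤ := by
    rw [hf, LinearMap.range_comp, Submodule.range_subtype]
    rw [Submodule.map_mkQ_eq_top]
    rw [hX, hW, ← Submodule.span_union]
    have : S ∪ (B \ (S \ T)) = B := by
      apply Set.Subset.antisymm
      · exact Set.union_subset hS Set.diff_subset
      · intro x hx
        by_cases h : x ∈ S \ T
        · exact Or.inl h.1
        · exact Or.inr ⟨hx, h⟩
    rw [Set.union_comm, this, hB.2]
  have e : (↥X ⧸ Submodule.comap X.subtype (X ⊓ Submodule.span K T)) ≃ₗ[K] V ⧸ W := by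
    rw [← hker]
    exact f.quotKerEquivOfSurjective (LinearMap.range_eq_top.1 hrange)
  rw [e.rank_eq, hW, rank_quot_eq hB hBsub]
  congr 2
  apply Set.Subset.antisymm
  · rintro x ⟨hxB, hx2⟩
    by_contra h
    exact hx2 ⟨hxB, h⟩
  · intro x hx
    exact ⟨hS hx.1, fun h => h.2 hx⟩

lemma adjacent_span_iff (hB : IsBasisSet K V B) {S T : Set V} (hS : S ⊆ B) (hT : T ⊆ B) :
    AdjacentSub K V (Submodule.span K S) (Submodule.span K T) ↔
      ((∃ u, S \ T = {u}) ∧ ∃ v, T \ S = {v}) := by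
  unfold AdjacentSub
  rw [rank_quot_comap hB hS hT]
  have h2 : Submodule.span K S ⊓ Submodule.span K T
      = Submodule.span K T ⊓ Submodule.span K S := inf_comm _ _
  rw [h2, rank_quot_comap hB hT hS, mk_set_eq_one_iff, mk_set_eq_one_iff]

end AdjDecode

section CardLemmas

lemma two_le_of_one_lt {β : Cardinal.{w}} (h : 1 < β) : 2 ≤ β := by
  rcases lt_or_ge β Cardinal.aleph0 with hb | hb
  · obtain ⟨n, rfl⟩ := Cardinal.lt_aleph0.1 hb
    exact_mod_cast h
  · exact (Cardinal.nat_lt_aleph0 2).le.trans hb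

lemma exists_ne_of_two_le {α : Type w} {s : Set α} (h : (2 : Cardinal) ≤ #s) (a : α) :
    ∃ x ∈ s, x ≠ a := by
  have h1 : 1 < #s := lt_of_lt_of_le one_lt_two h
  rw [Cardinal.one_lt_iff_nontrivial] at h1
  obtain ⟨⟨x, hx⟩, ⟨y, hy⟩, hxy⟩ := h1
  by_cases hxa : x = a
  · refine ⟨y, hy, fun hya => hxy ?_⟩
    exact Subtype.ext (hxa.trans hya.symm)
  · exact ⟨x, hx, hxa⟩

lemma add_eq_of_infinite {a b c : Cardinal.{w}} (hc : Cardinal.aleph0 ≤ c) (h : a + b = c)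
    (hb : b < c) : a = c := by
  refine le_antisymm (h ▸ self_le_add_right a b) ?_
  by_contra hlt
  push_neg at hlt
  exact absurd h (Cardinal.add_lt_of_lt hc hlt hb).ne

lemma card_diff_eq_of_lt {α : Type w} {W T : Set α} (hT : T ⊆ W)
    (hW : Cardinal.aleph0 ≤ #W) (h : #T < #W) : #(W \ T : Set α) = #W :=
  add_eq_of_infinite hW (Cardinal.mk_diff_add_mk hT) h

lemma exists_subset_card {α : Type w} {W : Set α} (hW : Cardinal.aleph0 ≤ #W)
    {κ : Cardinal.{w}} (hκ : κ ≤ #W) :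
    ∃ T ⊆ W, #T = κ ∧ #(W \ T : Set α) = #W := by
  rcases eq_or_lt_of_le hκ with heq | hlt
  · -- κ = #W : split W into two pieces of full size
    have hsum : #(↥W ⊕ ↥W) = #W := by
      simp [Cardinal.mk_sum, Cardinal.add_eq_self hW]
    obtain ⟨e⟩ := Cardinal.eq.1 hsum
    have hinj : Function.Injective fun x : ↥W => (e (Sum.inl x) : α) :=
      fun x y hxy => Sum.inl_injective (e.injective (Subtype.ext hxy))
    refine ⟨Set.range fun x : ↥W => (e (Sum.inl x) : α), ?_, ?_, ?_⟩
    · rintro _ ⟨x, rfl⟩; exact (e (Sum.inl x)).2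
    · rw [Cardinal.mk_range_eq _ hinj, heq]
    · have hsub : (Set.range fun x : ↥W => (e (Sum.inr x) : α)) ⊆
          W \ Set.range fun x : ↥W => (e (Sum.inl x) : α) := by
        rintro _ ⟨x, rfl⟩
        refine ⟨(e (Sum.inr x)).2, ?_⟩
        rintro ⟨y, hy⟩
        have := e.injective (Subtype.ext hy)
        simp at this
      have hinj' : Function.Injective fun x : ↥W => (e (Sum.inr x) : α) :=
        fun x y hxy => Sum.inr_injective (e.injective (Subtype.ext hxy))
      refine le_antisymm (Cardinal.mk_le_mk_of_subset Set.diff_subset) ?_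
      calc #W = #(Set.range fun x : ↥W => (e (Sum.inr x) : α)) :=
            (Cardinal.mk_range_eq _ hinj').symm
        _ ≤ _ := Cardinal.mk_le_mk_of_subset hsub
  · obtain ⟨T, hTW, hT⟩ := Cardinal.le_mk_iff_exists_subset.1 hκ
    exact ⟨T, hTW, hT, card_diff_eq_of_lt hTW hW (hT ▸ hlt)⟩

end CardLemmas

section GLemmas

variable {β : Cardinal.{v}} {G : Set (Submodule K V)} {B : Set V}

lemma span_mem_Gsub_iff (hB : IsBasisSet K V B) {S : Set V} (hS : S ⊆ B) :
    Submodule.span K S ∈ Gsub K V β ↔ #S = β ∧ #(B \ S : Set V) = Module.rank K V := by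
  unfold Gsub
  rw [Set.mem_setOf_eq, rank_span_eq hB hS, rank_quot_eq hB hS]

lemma span_mem_Gsup_iff (hB : IsBasisSet K V B) {S : Set V} (hS : S ⊆ B) :
    Submodule.span K S ∈ Gsup K V β ↔ #S = Module.rank K V ∧ #(B \ S : Set V) = β := by
  unfold Gsup
  rw [Set.mem_setOf_eq, rank_span_eq hB hS, rank_quot_eq hB hS]

/-- canonical decoding of an apartment element -/
lemma apartment_decode (hB : IsBasisSet K V B) {Z : Submodule K V}
    (hZ : Z ∈ apartmentOf K V G B) :
    (B ∩ Z : Set V) ⊆ B ∧ Z = Submodule.span K (B ∩ Z : Set V) ∧ Z ∈ G := by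
  obtain ⟨hZG, S, hS, rfl⟩ := hZ
  have hkey : (B ∩ (Submodule.span K S : Set V)) = S := by
    ext x
    constructor
    · rintro ⟨hxB, hxZ⟩
      exact (basis_mem_span_iff hB hS hxB).1 hxZ
    · intro hx
      exact ⟨hS hx, Submodule.subset_span hx⟩
  rw [hkey]
  exact ⟨hS, rfl, hZG⟩

lemma mem_apartment_of_span (hB : IsBasisSet K V B) {S : Set V} (hS : S ⊆ B)
    (hSG : Submodule.span K S ∈ G) : Submodule.span K S ∈ apartmentOf K V G B :=
  ⟨hSG, S, hS, rfl⟩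

/-- Lemma E: existence of an apartment element containing `x₁, x₂` and avoiding `y₁, y₂`. -/
lemma exists_apartment_elem (hα : Cardinal.aleph0 ≤ Module.rank K V)
    (hβ1 : 1 < β) (hβ : β ≤ Module.rank K V)
    (hG : G = Gsub K V β ∨ G = Gsup K V β) (hB : IsBasisSet K V B)
    {x₁ x₂ y₁ y₂ : V} (hx₁ : x₁ ∈ B) (hx₂ : x₂ ∈ B) (hy₁ : y₁ ∈ B) (hy₂ : y₂ ∈ B)
    (h11 : x₁ ≠ y₁) (h12 : x₁ ≠ y₂) (h21 : x₂ ≠ y₁) (h22 : x₂ ≠ y₂) :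
    ∃ S ⊆ B, x₁ ∈ S ∧ x₂ ∈ S ∧ y₁ ∉ S ∧ y₂ ∉ S ∧ Submodule.span K S ∈ G := by
  classical
  set α := Module.rank K V with hαdef
  set F : Set V := {x₁, x₂, y₁, y₂} with hF
  have hFB : F ⊆ B := by
    intro z hz
    rcases hz with rfl | rfl | rfl | rfl <;> assumption
  have hFfin : #F < Cardinal.aleph0 := by
    have : F.Finite := Set.Finite.insert _ (Set.Finite.insert _ (Set.Finite.insert _
      (Set.finite_singleton _)))
    exact Cardinal.lt_aleph0_of_finite _
  have hBcard : #B = α := card_basis hB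
  have hB0 : #(B \ F : Set V) = α := by
    rw [← hBcard]
    exact card_diff_eq_of_lt hFB (hBcard ▸ hα) (hBcard ▸ lt_of_lt_of_le hFfin hα)
  have hB0a : Cardinal.aleph0 ≤ #(B \ F : Set V) := hB0 ▸ hα
  have h2β : (2 : Cardinal) ≤ β := two_le_of_one_lt hβ1
  -- the two-element sets
  have hmx : #({x₁, x₂} : Set V) ≤ 2 := by
    calc #({x₁, x₂} : Set V) ≤ #({x₂} : Set V) + 1 := Cardinal.mk_insert_le
      _ = 2 := by rw [Cardinal.mk_singleton]; norm_num
  have hmy : #({y₁, y₂} : Set V) ≤ 2 := by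
    calc #({y₁, y₂} : Set V) ≤ #({y₂} : Set V) + 1 := Cardinal.mk_insert_le
      _ = 2 := by rw [Cardinal.mk_singleton]; norm_num
  rcases hG with rfl | rfl
  · -- Gsub : dimension β, codimension α
    obtain ⟨δ, hδ⟩ := exists_add_of_le (hmx.trans h2β)
    have hδle : δ ≤ α := le_trans (le_trans (self_le_add_left δ _) hδ.ge) hβ
    obtain ⟨T, hTB0, hTcard, hTdiff⟩ := exists_subset_card hB0a (hB0.symm ▸ hδle)
    set S : Set V := {x₁, x₂} ∪ T with hSdef
    have hTF : ∀ z ∈ T, z ∉ F := fun z hz => (hTB0 hz).2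
    have hSB : S ⊆ B := by
      apply Set.union_subset
      · intro z hz
        rcases hz with rfl | rfl
        · exact hx₁
        · exact hx₂
      · exact fun z hz => (hTB0 hz).1
    have hy₁S : y₁ ∉ S := by
      rintro ((rfl | rfl) | h)
      · exact h11 rfl
      · exact h21 rfl
      · exact hTF _ h (by right; right; left; rfl)
    have hy₂S : y₂ ∉ S := by
      rintro ((rfl | rfl) | h)
      · exact h12 rfl
      · exact h22 rfl
      · exact hTF _ h (by right; right; right; rfl)
    have hdisj : Disjoint ({x₁, x₂} : Set V) T := by
      rw [Set.disjoint_left]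
      rintro z (rfl | rfl) hz
      · exact hTF _ hz (by left; rfl)
      · exact hTF _ hz (by right; left; rfl)
    have hScard : #S = β := by
      rw [hSdef, Cardinal.mk_union_of_disjoint hdisj, hTcard]
      exact hδ.symm
    have hScompl : #(B \ S : Set V) = α := by
      apply le_antisymm
      · rw [← hBcard]; exact Cardinal.mk_le_mk_of_subset Set.diff_subset
      · have : α = #((B \ F) \ T : Set V) := by rw [hTdiff, hB0]
        rw [this]
        apply Cardinal.mk_le_mk_of_subset
        intro z hz
        refine ⟨(hz.1 : z ∈ (B \ F : Set V)).1, ?_⟩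
        rintro ((rfl | rfl) | h)
        · exact hz.1.2 (by left; rfl)
        · exact hz.1.2 (by right; left; rfl)
        · exact hz.2 h
    refine ⟨S, hSB, Or.inl (by left; rfl), Or.inl (by right; rfl), hy₁S, hy₂S, ?_⟩
    rw [span_mem_Gsub_iff hB hSB]
    exact ⟨hScard, hScompl⟩
  · -- Gsup : dimension α, codimension β
    obtain ⟨δ, hδ⟩ := exists_add_of_le (hmy.trans h2β)
    have hδle : δ ≤ α := le_trans (le_trans (self_le_add_left δ _) hδ.ge) hβ
    obtain ⟨T, hTB0, hTcard, hTdiff⟩ := exists_subset_card hB0a (hB0.symm ▸ hδle)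
    set S : Set V := B \ ({y₁, y₂} ∪ T) with hSdef
    have hTF : ∀ z ∈ T, z ∉ F := fun z hz => (hTB0 hz).2
    have hSB : S ⊆ B := Set.diff_subset
    have hx₁S : x₁ ∈ S := by
      refine ⟨hx₁, ?_⟩
      rintro ((rfl | rfl) | h)
      · exact h11 rfl
      · exact h12 rfl
      · exact hTF _ h (by left; rfl)
    have hx₂S : x₂ ∈ S := by
      refine ⟨hx₂, ?_⟩
      rintro ((rfl | rfl) | h)
      · exact h21 rfl
      · exact h22 rfl
      · exact hTF _ h (by right; left; rfl)
    have hy₁S : y₁ ∉ S := fun h => h.2 (Or.inl (by left; rfl))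
    have hy₂S : y₂ ∉ S := fun h => h.2 (Or.inl (by right; rfl))
    have hcompl : (B \ S : Set V) = {y₁, y₂} ∪ T := by
      rw [hSdef, Set.diff_diff_right_self]
      apply Set.inter_eq_self_of_subset_right
      apply Set.union_subset
      · intro z hz
        rcases hz with rfl | rfl
        · exact hy₁
        · exact hy₂
      · exact fun z hz => (hTB0 hz).1
    have hdisj : Disjoint ({y₁, y₂} : Set V) T := by
      rw [Set.disjoint_left]
      rintro z (rfl | rfl) hz
      · exact hTF _ hz (by right; right; left; rfl)
      · exact hTF _ hz (by right; right; right; rfl)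
    have hScompl : #(B \ S : Set V) = β := by
      rw [hcompl, Cardinal.mk_union_of_disjoint hdisj, hTcard]
      exact hδ.symm
    have hScard : #S = α := by
      apply le_antisymm
      · rw [← hBcard]; exact Cardinal.mk_le_mk_of_subset hSB
      · have : α = #((B \ F) \ T : Set V) := by rw [hTdiff, hB0]
        rw [this]
        apply Cardinal.mk_le_mk_of_subset
        intro z hz
        refine ⟨(hz.1 : z ∈ (B \ F : Set V)).1, ?_⟩
        rintro ((rfl | rfl) | h)
        · exact hz.1.2 (by right; right; left; rfl)
        · exact hz.1.2 (by right; right; right; rfl)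
        · exact hz.2 h
    refine ⟨S, hSB, hx₁S, hx₂S, hy₁S, hy₂S, ?_⟩
    rw [span_mem_Gsup_iff hB hSB]
    exact ⟨hScard, hScompl⟩

end GLemmas

/-- The candidate maximal inexact subset determined by `b, c`. -/
def Abc (A : Set (Submodule K V)) (b c : V) : Set (Submodule K V) :=
  {Z ∈ A | (b : V) ∈ Z → c ∈ Z}

section Replacement

variable {β : Cardinal.{v}} {G : Set (Submodule K V)} {B : Set V}

/-- The linear automorphism sending `b ↦ b + c` and fixing the rest of the basis. -/
noncomputable def replEquiv (hB : IsBasisSet K V B) {b c : V} (hb : b ∈ B) (hc : c ∈ B)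
    (hbc : b ≠ c) : V ≃ₗ[K] V := by
  classical
  refine LinearEquiv.ofLinear
    (LinearMap.id + ((bas hB).coord ⟨b, hb⟩).smulRight c)
    (LinearMap.id - ((bas hB).coord ⟨b, hb⟩).smulRight c) ?_ ?_ <;>
  · apply LinearMap.ext
    intro x
    classical
    have hcc : (bas hB).coord ⟨b, hb⟩ c = 0 := by
      rw [Module.Basis.coord_apply, repr_basis hB hc, Finsupp.single_apply]
      simp [Subtype.ext_iff, hbc.symm]
    simp only [LinearMap.comp_apply, LinearMap.add_apply, LinearMap.sub_apply,
      LinearMap.id_apply, LinearMap.smulRight_apply, map_add, map_sub, map_smul, hcc,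
      smul_eq_mul, mul_zero, add_zero, sub_zero, smul_zero, zero_smul]
    abel

lemma replEquiv_apply (hB : IsBasisSet K V B) {b c : V} (hb : b ∈ B) (hc : c ∈ B)
    (hbc : b ≠ c) (x : V) :
    replEquiv hB hb hc hbc x = x + ((bas hB).coord ⟨b, hb⟩ x) • c := rfl

lemma replEquiv_fix (hB : IsBasisSet K V B) {b c x : V} (hb : b ∈ B) (hc : c ∈ B)
    (hbc : b ≠ c) (hx : x ∈ B) (hxb : x ≠ b) : replEquiv hB hb hc hbc x = x := by
  rw [replEquiv_apply]
  classical
  have : (bas hB).coord ⟨b, hb⟩ x = 0 := by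
    rw [Module.Basis.coord_apply, repr_basis hB hx, Finsupp.single_apply]
    simp [Subtype.ext_iff, hxb]
  rw [this, zero_smul, add_zero]

lemma replEquiv_b (hB : IsBasisSet K V B) {b c : V} (hb : b ∈ B) (hc : c ∈ B)
    (hbc : b ≠ c) : replEquiv hB hb hc hbc b = b + c := by
  rw [replEquiv_apply]
  classical
  have : (bas hB).coord ⟨b, hb⟩ b = 1 := by
    rw [Module.Basis.coord_apply, repr_basis hB hb, Finsupp.single_apply]
    simp
  rw [this, one_smul]

lemma isBasisSet_image (hB : IsBasisSet K V B) (e : V ≃ₗ[K] V) :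
    IsBasisSet K V (e '' B) := by
  constructor
  · have h1 : LinearIndependent K (fun i : ↥B => e ↑i) :=
      hB.1.map' e.toLinearMap e.ker
    exact (show LinearIndepOn K (⇑e) B from h1).id_image
  · rw [Submodule.span_image_linearEquiv, hB.2, Submodule.map_top]
    simp

lemma abc_inexact (hα : Cardinal.aleph0 ≤ Module.rank K V)
    (hβ1 : 1 < β) (hβ : β ≤ Module.rank K V)
    (hG : G = Gsub K V β ∨ G = Gsup K V β) (hB : IsBasisSet K V B)
    {b c : V} (hb : b ∈ B) (hc : c ∈ B) (hbc : b ≠ c) :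
    Inexact K V G (apartmentOf K V G B) (Abc (apartmentOf K V G B) b c) := by
  classical
  set e := replEquiv hB hb hc hbc with he
  set B' : Set V := e '' B with hB'def
  have hB' : IsBasisSet K V B' := isBasisSet_image hB e
  have hbcB' : b + c ∈ B' := ⟨b, hb, replEquiv_b hB hb hc hbc⟩
  have hcB' : c ∈ B' := ⟨c, hc, replEquiv_fix hB hb hc hbc hc hbc.symm⟩
  have hbne0 : b ≠ 0 := hB.1.ne_zero ⟨b, hb⟩
  have hbcc : b + c ≠ c := fun h => hbne0 (by
    have := congrArg (fun z => z - c) h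
    simpa using this)
  -- the witness W in the new apartment but not in the old one
  obtain ⟨S₀, hS₀B', hbcS₀, -, hcS₀, -, hS₀G⟩ :=
    exists_apartment_elem hα hβ1 hβ hG hB' hbcB' hbcB' hcB' hcB' hbcc hbcc hbcc hbcc
  refine ⟨apartmentOf K V G B', ⟨B', hB', rfl⟩, ?_, ?_⟩
  · -- the apartments differ
    intro hAA
    have hW : Submodule.span K S₀ ∈ apartmentOf K V G B :=
      hAA ▸ mem_apartment_of_span hB' hS₀B' hS₀G
    obtain ⟨hsub, hdec, -⟩ := apartment_decode hB hW
    have hbcW : b + c ∈ Submodule.span K (B ∩ (Submodule.span K S₀) : Set V) := by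
      rw [← hdec]
      exact Submodule.subset_span hbcS₀
    rw [mem_span_iff hB hsub] at hbcW
    have hrepr : (bas hB).repr (b + c) ⟨c, hc⟩ = 1 := by
      rw [map_add, Finsupp.add_apply, repr_basis hB hb, repr_basis hB hc,
        Finsupp.single_apply, Finsupp.single_apply]
      simp [Subtype.ext_iff, hbc]
    have hcW : c ∈ Submodule.span K S₀ := by
      have := hbcW ⟨c, hc⟩ (by rw [hrepr]; exact one_ne_zero)
      exact this.2
    exact hcS₀ ((basis_mem_span_iff hB' hS₀B' hcB').1 hcW)
  · -- A_bc is contained in the new apartment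
    rintro Z ⟨hZA, hZbc⟩
    obtain ⟨hsub, hdec, hZG⟩ := apartment_decode hB hZA
    set S : Set V := B ∩ Z with hSdef
    by_cases hbS : b ∈ S
    · -- b ∈ S, hence c ∈ S : use e '' S
      have hbZ : (b : V) ∈ Z := hbS.2
      have hcZ : c ∈ Z := hZbc hbZ
      have hcS : c ∈ S := ⟨hc, hcZ⟩
      refine ⟨hZG, e '' S, Set.image_mono (f := ⇑e) hsub, ?_⟩
      have hin : ∀ x ∈ Submodule.span K S, e x ∈ Submodule.span K S := by
        intro x hx
        rw [replEquiv_apply]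
        exact Submodule.add_mem _ hx (Submodule.smul_mem _ _
          (Submodule.subset_span hcS))
      have hin' : ∀ x ∈ Submodule.span K S, e.symm x ∈ Submodule.span K S := by
        intro x hx
        have hsymm : e.symm x = x - ((bas hB).coord ⟨b, hb⟩ x) • c := rfl
        rw [hsymm]
        exact Submodule.sub_mem _ hx (Submodule.smul_mem _ _
          (Submodule.subset_span hcS))
      have himg : Submodule.span K (e '' S) = Submodule.span K S := by
        rw [Submodule.span_image_linearEquiv]
        apply le_antisymm
        · rintro _ ⟨x, hx, rfl⟩
          exact hin x hx
        · intro x hx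
          have : x = e (e.symm x) := (e.apply_symm_apply x).symm
          rw [this]
          exact Submodule.mem_map_of_mem (hin' x hx)
      rw [himg, ← hdec]
    · -- b ∉ S : S itself is a subset of B'
      refine ⟨hZG, S, ?_, hdec⟩
      intro x hx
      have hxb : x ≠ b := fun h => hbS (h ▸ hx)
      exact ⟨x, hx.1, replEquiv_fix hB hb hc hbc hx.1 hxb⟩

end Replacement

section Classification

variable {β : Cardinal.{v}} {G : Set (Submodule K V)} {B : Set V}

lemma inexact_subset_abc (hα : Cardinal.aleph0 ≤ Module.rank K V)
    (hG : G = Gsub K V β ∨ G = Gsup K V β) (hB : IsBasisSet K V B)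
    {X : Set (Submodule K V)} (hXA : X ⊆ apartmentOf K V G B)
    (hX : Inexact K V G (apartmentOf K V G B) X) :
    ∃ b ∈ B, ∃ c ∈ B, b ≠ c ∧ X ⊆ Abc (apartmentOf K V G B) b c := by
  classical
  by_contra hcon
  push_neg at hcon
  -- from the negation : for all b ≠ c in B there is Z ∈ X with b ∈ Z, c ∉ Z
  have hcontra : ∀ b ∈ B, ∀ c ∈ B, b ≠ c → ∃ Z ∈ X, (b : V) ∈ Z ∧ c ∉ Z := by
    intro b hb c hc hbc
    obtain ⟨Z, hZX, hZ⟩ := Set.not_subset.1 (hcon b hb c hc hbc)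
    refine ⟨Z, hZX, ?_⟩
    have hZA := hXA hZX
    by_contra h
    push_neg at h
    exact hZ ⟨hZA, fun hbZ => by
      by_contra hcZ
      exact absurd (h hbZ) (by simpa using hcZ)⟩
  obtain ⟨A₂, ⟨B₂, hB₂, rfl⟩, hne, hXA₂⟩ := hX
  apply hne
  -- show the two apartments coincide
  have hBcard : (2 : Cardinal) ≤ #B := by
    rw [card_basis hB]
    exact (Cardinal.nat_lt_aleph0 2).le.trans hα
  have hscale : ∀ b ∈ B, ∃ z ∈ B₂, ∃ μ : K, μ ≠ 0 ∧ b = μ • z := by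
    intro b hb
    obtain ⟨c, hcB, hcb⟩ := exists_ne_of_two_le hBcard b
    set J : Set (Submodule K V) := {Z | Z ∈ X ∧ (b : V) ∈ Z} with hJ
    have hJne : J.Nonempty := by
      obtain ⟨Z, hZX, hbZ, -⟩ := hcontra b hb c hcB (fun h => hcb h.symm)
      exact ⟨Z, hZX, hbZ⟩
    have : Nonempty ↥J := hJne.to_subtype
    have hNB : (⨅ (Z : ↥J), (Z : Submodule K V)) = Submodule.span K {b} := by
      have h1 : (⨅ (Z : ↥J), (Z : Submodule K V))
          = ⨅ (Z : ↥J), Submodule.span K (B ∩ (Z : Submodule K V) : Set V) :=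
        iInf_congr fun Z => (apartment_decode hB (hXA Z.2.1)).2.1
      rw [h1, span_iInf hB fun Z => Set.inter_subset_left]
      congr 1
      ext x
      simp only [Set.mem_iInter, Set.mem_singleton_iff]
      constructor
      · intro hx
        by_contra hxb
        obtain ⟨Z₀, hZ₀⟩ := hJne
        have hxB : x ∈ B := (hx ⟨Z₀, hZ₀⟩).1
        obtain ⟨Z, hZX, hbZ, hxZ⟩ := hcontra b hb x hxB (fun h => hxb h.symm)
        exact hxZ (hx ⟨Z, hZX, hbZ⟩).2
      · rintro rfl Z
        exact ⟨hb, Z.2.2⟩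
    have hNB₂ : (⨅ (Z : ↥J), (Z : Submodule K V))
        = Submodule.span K (⋂ (Z : ↥J), (B₂ ∩ (Z : Submodule K V) : Set V)) := by
      have h1 : (⨅ (Z : ↥J), (Z : Submodule K V))
          = ⨅ (Z : ↥J), Submodule.span K (B₂ ∩ (Z : Submodule K V) : Set V) :=
        iInf_congr fun Z => (apartment_decode hB₂ (hXA₂ Z.2.1)).2.1
      rw [h1, span_iInf hB₂ fun Z => Set.inter_subset_left]
    set C : Set V := ⋂ (Z : ↥J), (B₂ ∩ (Z : Submodule K V) : Set V) with hC
    have hCB₂ : C ⊆ B₂ := (Set.iInter_subset _ (Classical.arbitrary _)).trans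
      Set.inter_subset_left
    have hCcard : #C = 1 := by
      have := rank_span_eq hB₂ hCB₂
      rw [← hNB₂, hNB, rank_span_eq hB (by simpa using hb : ({b} : Set V) ⊆ B)] at this
      rw [← this, Cardinal.mk_singleton]
    obtain ⟨z, hz⟩ := _root_.mk_set_eq_one_iff.1 hCcard
    have hzB₂ : z ∈ B₂ := hCB₂ (hz ▸ rfl)
    have hbz : b ∈ Submodule.span K ({z} : Set V) := by
      rw [← hz, ← hNB₂, hNB]
      exact Submodule.subset_span rfl
    obtain ⟨μ, hμ⟩ := Submodule.mem_span_singleton.1 hbz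
    have hbne : b ≠ 0 := hB.1.ne_zero ⟨b, hb⟩
    refine ⟨z, hzB₂, μ, ?_, hμ.symm⟩
    rintro rfl
    rw [zero_smul] at hμ
    exact hbne hμ.symm
  choose! f hfB₂ μf hμf hbf using hscale
  have hspan_eq : ∀ T ⊆ B, Submodule.span K T = Submodule.span K (f '' T) := by
    intro T hT
    apply le_antisymm
    · rw [Submodule.span_le]
      intro x hx
      rw [hbf x (hT hx)]
      exact Submodule.smul_mem _ _ (Submodule.subset_span ⟨x, hx, rfl⟩)
    · rw [Submodule.span_le]
      rintro _ ⟨x, hx, rfl⟩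
      have h1 : f x = (μf x)⁻¹ • (μf x • f x) := by
        rw [smul_smul, inv_mul_cancel₀ (hμf x (hT hx)), one_smul]
      rw [h1, ← hbf x (hT hx)]
      exact Submodule.smul_mem _ _ (Submodule.subset_span hx)
  have hB₂img : B₂ ⊆ f '' B := by
    intro z hz
    have hz' : z ∈ Submodule.span K (f '' B) := by
      rw [← hspan_eq B le_rfl, hB.2]
      trivial
    have hfBB₂ : f '' B ⊆ B₂ := by
      rintro _ ⟨x, hx, rfl⟩
      exact hfB₂ x hx
    exact (basis_mem_span_iff hB₂ hfBB₂ hz).1 hz'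
  ext W
  constructor
  · rintro ⟨hWG, S₂, hS₂, rfl⟩
    have hS₂f : S₂ ⊆ f '' B := fun x hx => hB₂img (hS₂ hx)
    set T : Set V := B ∩ f ⁻¹' S₂ with hT
    have hfT : f '' T = S₂ := by
      apply Set.Subset.antisymm
      · rintro _ ⟨x, hx, rfl⟩
        exact hx.2
      · intro s hs
        obtain ⟨x, hxB, rfl⟩ := hS₂f hs
        exact ⟨x, ⟨hxB, hs⟩, rfl⟩
    refine ⟨hWG, T, Set.inter_subset_left, ?_⟩
    rw [hspan_eq T Set.inter_subset_left, hfT]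
  · rintro ⟨hWG, T, hTB, rfl⟩
    refine ⟨hWG, f '' T, ?_, hspan_eq T hTB⟩
    rintro _ ⟨x, hx, rfl⟩
    exact hfB₂ x (hTB hx)

lemma abc_subset_inj (hα : Cardinal.aleph0 ≤ Module.rank K V)
    (hβ1 : 1 < β) (hβ : β ≤ Module.rank K V)
    (hG : G = Gsub K V β ∨ G = Gsup K V β) (hB : IsBasisSet K V B)
    {b c d e : V} (hb : b ∈ B) (hc : c ∈ B) (hd : d ∈ B) (he : e ∈ B)
    (hbc : b ≠ c) (hde : d ≠ e)
    (hsub : Abc (apartmentOf K V G B) b c ⊆ Abc (apartmentOf K V G B) d e) :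
    b = d ∧ c = e := by
  by_contra hcon
  have hkey : ∃ Z ∈ Abc (apartmentOf K V G B) b c, (d : V) ∈ Z ∧ e ∉ Z := by
    rcases eq_or_ne b d with rfl | hbd
    · have hce : c ≠ e := fun h => hcon ⟨rfl, h⟩
      obtain ⟨S, hSB, hdS, hcS, heS, -, hSG⟩ :=
        exists_apartment_elem hα hβ1 hβ hG hB hd hc he he hde hde hce hce
      refine ⟨Submodule.span K S, ⟨mem_apartment_of_span hB hSB hSG, ?_⟩, ?_, ?_⟩
      · intro _
        exact Submodule.subset_span hcS
      · exact Submodule.subset_span hdS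
      · rw [basis_mem_span_iff hB hSB he]
        exact heS
    · obtain ⟨S, hSB, hdS, -, heS, hbS, hSG⟩ :=
        exists_apartment_elem hα hβ1 hβ hG hB hd hd he hb hde hbd.symm hde hbd.symm
      refine ⟨Submodule.span K S, ⟨mem_apartment_of_span hB hSB hSG, ?_⟩, ?_, ?_⟩
      · intro hbZ
        exact absurd ((basis_mem_span_iff hB hSB hb).1 hbZ) hbS
      · exact Submodule.subset_span hdS
      · rw [basis_mem_span_iff hB hSB he]
        exact heS
  obtain ⟨Z, hZ, hdZ, heZ⟩ := hkey
  exact heZ ((hsub hZ).2 hdZ)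

def MaxInexact (G A M : Set (Submodule K V)) : Prop :=
  M ⊆ A ∧ Inexact K V G A M ∧
    ∀ M', M ⊆ M' → M' ⊆ A → Inexact K V G A M' → M' = M

lemma maxInexact_iff (hα : Cardinal.aleph0 ≤ Module.rank K V)
    (hβ1 : 1 < β) (hβ : β ≤ Module.rank K V)
    (hG : G = Gsub K V β ∨ G = Gsup K V β) (hB : IsBasisSet K V B)
    {M : Set (Submodule K V)} :
    MaxInexact G (apartmentOf K V G B) M ↔
      ∃ b ∈ B, ∃ c ∈ B, b ≠ c ∧ M = Abc (apartmentOf K V G B) b c := by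
  constructor
  · rintro ⟨hMA, hMin, hMmax⟩
    obtain ⟨b, hb, c, hc, hbc, hMabc⟩ := inexact_subset_abc hα hG hB hMA hMin
    refine ⟨b, hb, c, hc, hbc, ?_⟩
    exact (hMmax _ hMabc (Set.sep_subset _ _)
      (abc_inexact hα hβ1 hβ hG hB hb hc hbc)).symm
  · rintro ⟨b, hb, c, hc, hbc, rfl⟩
    refine ⟨Set.sep_subset _ _, abc_inexact hα hβ1 hβ hG hB hb hc hbc, ?_⟩
    intro M' hsub hM'A hM'in
    obtain ⟨d, hd, e, he, hde, hM'abc⟩ := inexact_subset_abc hα hG hB hM'A hM'in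
    obtain ⟨rfl, rfl⟩ := abc_subset_inj hα hβ1 hβ hG hB hb hc hd he hbc hde
      (hsub.trans hM'abc)
    exact Set.Subset.antisymm hM'abc hsub

end Classification

section Helpers

variable {β : Cardinal.{v}} {G : Set (Submodule K V)} {B : Set V}

lemma mem_abc_iff {A : Set (Submodule K V)} {Z : Submodule K V} {b c : V} (hZ : Z ∈ A) :
    Z ∈ Abc A b c ↔ ((b : V) ∈ Z → c ∈ Z) :=
  ⟨fun h => h.2, fun h => ⟨hZ, h⟩⟩

lemma mem_diff_abc {A : Set (Submodule K V)} {Z : Submodule K V} {b c : V} :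
    Z ∈ A \ Abc A b c ↔ Z ∈ A ∧ (b : V) ∈ Z ∧ c ∉ Z := by
  simp only [Abc, Set.mem_diff, Set.mem_setOf_eq]
  tauto

lemma exists_avoid {s : Set V} (hs : Cardinal.aleph0 ≤ #s) (a₁ a₂ a₃ : V) :
    ∃ x ∈ s, x ≠ a₁ ∧ x ≠ a₂ ∧ x ≠ a₃ := by
  have hF : #({a₁, a₂, a₃} : Set V) < Cardinal.aleph0 :=
    Cardinal.lt_aleph0_of_finite _
  have h1 : #(s \ {a₁, a₂, a₃} : Set V) ≠ 0 := by
    have h2 : #(s ∩ {a₁, a₂, a₃} : Set V) < ℵ₀ :=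
      lt_of_le_of_lt (Cardinal.mk_le_mk_of_subset Set.inter_subset_right) hF
    have h3 := Cardinal.mk_diff_add_mk (Set.inter_subset_left : s ∩ {a₁, a₂, a₃} ⊆ s)
    have h4 : s \ (s ∩ {a₁, a₂, a₃}) = s \ {a₁, a₂, a₃} := Set.diff_self_inter
    rw [h4] at h3
    intro h0
    rw [h0, zero_add] at h3
    exact absurd (h3 ▸ h2) (not_lt.2 hs)
  obtain ⟨⟨x, hx⟩⟩ := Cardinal.mk_ne_zero_iff.1 h1
  refine ⟨x, hx.1, ?_, ?_, ?_⟩ <;>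
  · rintro rfl
    exact hx.2 (by simp)

lemma elem_two_le (hα : Cardinal.aleph0 ≤ Module.rank K V) (hβ1 : 1 < β)
    (hG : G = Gsub K V β ∨ G = Gsup K V β) (hB : IsBasisSet K V B)
    {Z : Submodule K V} (hZ : Z ∈ apartmentOf K V G B) :
    2 ≤ #(B ∩ Z : Set V) ∧ 2 ≤ #(B \ Z : Set V) := by
  obtain ⟨hsub, hdec, hZG⟩ := apartment_decode hB hZ
  have hdiff : (B \ (B ∩ Z) : Set V) = (B \ Z : Set V) := Set.diff_self_inter
  have h2a : (2 : Cardinal) ≤ Cardinal.aleph0 := (Cardinal.nat_lt_aleph0 2).le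
  have h2r : (2 : Cardinal) ≤ Module.rank K V := h2a.trans hα
  rcases hG with rfl | rfl
  · obtain ⟨h1, h2⟩ := (span_mem_Gsub_iff hB hsub).1 (hdec ▸ hZG)
    rw [← hdiff]
    exact ⟨h1.symm ▸ two_le_of_one_lt hβ1, h2.symm ▸ h2r⟩
  · obtain ⟨h1, h2⟩ := (span_mem_Gsup_iff hB hsub).1 (hdec ▸ hZG)
    rw [← hdiff]
    exact ⟨h1.symm ▸ h2r, h2.symm ▸ two_le_of_one_lt hβ1⟩

lemma elem_dichotomy (hα : Cardinal.aleph0 ≤ Module.rank K V)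
    (hG : G = Gsub K V β ∨ G = Gsup K V β) (hB : IsBasisSet K V B) :
    (∀ Z ∈ apartmentOf K V G B, Cardinal.aleph0 ≤ #(B \ Z : Set V)) ∨
      (∀ Z ∈ apartmentOf K V G B, Cardinal.aleph0 ≤ #(B ∩ Z : Set V)) := by
  rcases hG with rfl | rfl
  · left
    intro Z hZ
    obtain ⟨hsub, hdec, hZG⟩ := apartment_decode hB hZ
    have hdiff : (B \ (B ∩ Z) : Set V) = (B \ Z : Set V) := Set.diff_self_inter
    obtain ⟨-, h2⟩ := (span_mem_Gsub_iff hB hsub).1 (hdec ▸ hZG)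
    rw [← hdiff, h2]
    exact hα
  · right
    intro Z hZ
    obtain ⟨hsub, hdec, hZG⟩ := apartment_decode hB hZ
    obtain ⟨h1, -⟩ := (span_mem_Gsup_iff hB hsub).1 (hdec ▸ hZG)
    rw [h1]
    exact hα

end Helpers

/-- The purely combinatorial (inexactness-based) characterisation of adjacency. -/
def AdjR (G A : Set (Submodule K V)) (X Y : Submodule K V) : Prop :=
  X ≠ Y ∧
  (∃ M N, MaxInexact G A M ∧ MaxInexact G A N ∧ X ∉ M ∧ Y ∉ N ∧
    (A \ M) ∩ (A \ N) = ∅ ∧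
    ∀ L, MaxInexact G A L → ((A \ L) ∩ (A \ M)).Nonempty →
      ((A \ L) ∩ (A \ N)).Nonempty → (X ∈ L ↔ Y ∈ L)) ∧
  (∃ M N, MaxInexact G A M ∧ MaxInexact G A N ∧ X ∉ M ∧ Y ∈ M ∧ Y ∉ N ∧ X ∈ N ∧
    ((A \ M) ∩ (A \ N)).Nonempty)

section MainCombinatorial

variable {β : Cardinal.{v}} {G : Set (Submodule K V)} {B : Set V}

lemma exists_elem_mem (hα : Cardinal.aleph0 ≤ Module.rank K V)
    (hβ1 : 1 < β) (hβ : β ≤ Module.rank K V)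
    (hG : G = Gsub K V β ∨ G = Gsup K V β) (hB : IsBasisSet K V B)
    {x₁ x₂ y₁ y₂ : V} (hx₁ : x₁ ∈ B) (hx₂ : x₂ ∈ B) (hy₁ : y₁ ∈ B) (hy₂ : y₂ ∈ B)
    (h11 : x₁ ≠ y₁) (h12 : x₁ ≠ y₂) (h21 : x₂ ≠ y₁) (h22 : x₂ ≠ y₂) :
    ∃ Z ∈ apartmentOf K V G B, x₁ ∈ Z ∧ x₂ ∈ Z ∧ y₁ ∉ Z ∧ y₂ ∉ Z := by
  obtain ⟨S, hSB, h1, h2, h3, h4, hSG⟩ :=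
    exists_apartment_elem hα hβ1 hβ hG hB hx₁ hx₂ hy₁ hy₂ h11 h12 h21 h22
  refine ⟨Submodule.span K S, mem_apartment_of_span hB hSB hSG,
    Submodule.subset_span h1, Submodule.subset_span h2, ?_, ?_⟩
  · exact fun h => h3 ((basis_mem_span_iff hB hSB hy₁).1 h)
  · exact fun h => h4 ((basis_mem_span_iff hB hSB hy₂).1 h)

lemma adjR_of_adjacent (hα : Cardinal.aleph0 ≤ Module.rank K V)
    (hβ1 : 1 < β) (hβ : β ≤ Module.rank K V)
    (hG : G = Gsub K V β ∨ G = Gsup K V β) (hB : IsBasisSet K V B)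
    {X Y : Submodule K V} (hX : X ∈ apartmentOf K V G B) (hY : Y ∈ apartmentOf K V G B)
    (hadj : AdjacentSub K V X Y) :
    AdjR G (apartmentOf K V G B) X Y := by
  classical
  obtain ⟨hXG, S, hSB, rfl⟩ := hX
  obtain ⟨hYG, T, hTB, rfl⟩ := hY
  have hX : Submodule.span K S ∈ apartmentOf K V G B := ⟨hXG, S, hSB, rfl⟩
  have hY : Submodule.span K T ∈ apartmentOf K V G B := ⟨hYG, T, hTB, rfl⟩
  set A := apartmentOf K V G B with hAdef
  have hmemS : ∀ w ∈ B, (w ∈ Submodule.span K S ↔ w ∈ S) :=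
    fun w hw => basis_mem_span_iff hB hSB hw
  have hmemT : ∀ w ∈ B, (w ∈ Submodule.span K T ↔ w ∈ T) :=
    fun w hw => basis_mem_span_iff hB hTB hw
  obtain ⟨⟨u, huEq⟩, ⟨v, hvEq⟩⟩ := (adjacent_span_iff hB hSB hTB).1 hadj
  have huST : u ∈ S \ T := huEq ▸ rfl
  have hvTS : v ∈ T \ S := hvEq ▸ rfl
  have huB : u ∈ B := hSB huST.1
  have hvB : v ∈ B := hTB hvTS.1
  have huv : u ≠ v := fun h => hvTS.2 (h ▸ huST.1)
  have huX : u ∈ Submodule.span K S := Submodule.subset_span huST.1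
  have huY : u ∉ Submodule.span K T := fun h => huST.2 ((hmemT u huB).1 h)
  have hvY : v ∈ Submodule.span K T := Submodule.subset_span hvTS.1
  have hvX : v ∉ Submodule.span K S := fun h => hvTS.2 ((hmemS v hvB).1 h)
  have hagree : ∀ w ∈ B, w ≠ u → w ≠ v →
      (w ∈ Submodule.span K S ↔ w ∈ Submodule.span K T) := by
    intro w hwB hwu hwv
    rw [hmemS w hwB, hmemT w hwB]
    constructor
    · intro hwS
      by_contra hwT
      exact hwu (by have : w ∈ S \ T := ⟨hwS, hwT⟩; rwa [huEq] at this)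
    · intro hwT
      by_contra hwS
      exact hwv (by have : w ∈ T \ S := ⟨hwT, hwS⟩; rwa [hvEq] at this)
  refine ⟨fun h => huY (h ▸ huX), ?_, ?_⟩
  · -- the P-part
    refine ⟨Abc A u v, Abc A v u,
      (maxInexact_iff hα hβ1 hβ hG hB).2 ⟨u, huB, v, hvB, huv, rfl⟩,
      (maxInexact_iff hα hβ1 hβ hG hB).2 ⟨v, hvB, u, huB, huv.symm, rfl⟩,
      fun h => hvX (h.2 huX), fun h => huY (h.2 hvY), ?_, ?_⟩
    · rw [Set.eq_empty_iff_forall_notMem]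
      rintro Z ⟨hZ1, hZ2⟩
      obtain ⟨-, hu1, hv1⟩ := mem_diff_abc.1 hZ1
      obtain ⟨-, hv2, -⟩ := mem_diff_abc.1 hZ2
      exact hv1 hv2
    · intro L hL hne1 hne2
      obtain ⟨d, hdB, e, heB, hde, rfl⟩ := (maxInexact_iff hα hβ1 hβ hG hB).1 hL
      obtain ⟨Z₁, hZ₁1, hZ₁2⟩ := hne1
      obtain ⟨Z₂, hZ₂1, hZ₂2⟩ := hne2
      obtain ⟨-, hdZ₁, heZ₁⟩ := mem_diff_abc.1 hZ₁1
      obtain ⟨-, huZ₁, hvZ₁⟩ := mem_diff_abc.1 hZ₁2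
      obtain ⟨-, hdZ₂, heZ₂⟩ := mem_diff_abc.1 hZ₂1
      obtain ⟨-, hvZ₂, huZ₂⟩ := mem_diff_abc.1 hZ₂2
      have hdu : d ≠ u := fun h => huZ₂ (h ▸ hdZ₂)
      have hdv : d ≠ v := fun h => hvZ₁ (h ▸ hdZ₁)
      have heu : e ≠ u := fun h => heZ₁ (h ▸ huZ₁)
      have hev : e ≠ v := fun h => heZ₂ (h ▸ hvZ₂)
      rw [mem_abc_iff hX, mem_abc_iff hY, hagree d hdB hdu hdv, hagree e heB heu hev]
  · -- the Q-part
    obtain ⟨hS2, -⟩ := elem_two_le hα hβ1 hG hB hX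
    have hSeq : (B ∩ (Submodule.span K S : Set V)) = S := by
      ext w
      constructor
      · rintro ⟨hwB, hwX⟩
        exact (hmemS w hwB).1 hwX
      · intro hw
        exact ⟨hSB hw, Submodule.subset_span hw⟩
    obtain ⟨x₀, hx₀S, hx₀u⟩ := exists_ne_of_two_le (hSeq ▸ hS2) u
    have hx₀T : x₀ ∈ T := by
      by_contra h
      exact hx₀u (by have : x₀ ∈ S \ T := ⟨hx₀S, h⟩; rwa [huEq] at this)
    have hx₀B : x₀ ∈ B := hSB hx₀S
    have hx₀v : x₀ ≠ v := fun h => hvTS.2 (h ▸ hx₀S)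
    have hx₀X : x₀ ∈ Submodule.span K S := Submodule.subset_span hx₀S
    have hx₀Y : x₀ ∈ Submodule.span K T := Submodule.subset_span hx₀T
    refine ⟨Abc A x₀ v, Abc A x₀ u,
      (maxInexact_iff hα hβ1 hβ hG hB).2 ⟨x₀, hx₀B, v, hvB, hx₀v, rfl⟩,
      (maxInexact_iff hα hβ1 hβ hG hB).2 ⟨x₀, hx₀B, u, huB, hx₀u, rfl⟩,
      fun h => hvX (h.2 hx₀X), ⟨hY, fun _ => hvY⟩,
      fun h => huY (h.2 hx₀Y), ⟨hX, fun _ => huX⟩, ?_⟩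
    obtain ⟨Z, hZA, hx₀Z, -, hvZ, huZ⟩ :=
      exists_elem_mem hα hβ1 hβ hG hB hx₀B hx₀B hvB huB hx₀v hx₀u hx₀v hx₀u
    exact ⟨Z, mem_diff_abc.2 ⟨hZA, hx₀Z, hvZ⟩, mem_diff_abc.2 ⟨hZA, hx₀Z, huZ⟩⟩

end MainCombinatorial

section Converse

variable {β : Cardinal.{v}} {G : Set (Submodule K V)} {B : Set V}

lemma adjacent_of_adjR (hα : Cardinal.aleph0 ≤ Module.rank K V)
    (hβ1 : 1 < β) (hβ : β ≤ Module.rank K V)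
    (hG : G = Gsub K V β ∨ G = Gsup K V β) (hB : IsBasisSet K V B)
    {X Y : Submodule K V} (hX : X ∈ apartmentOf K V G B) (hY : Y ∈ apartmentOf K V G B)
    (h : AdjR G (apartmentOf K V G B) X Y) :
    AdjacentSub K V X Y := by
  classical
  obtain ⟨hXG, S, hSB, rfl⟩ := hX
  obtain ⟨hYG, T, hTB, rfl⟩ := hY
  have hX : Submodule.span K S ∈ apartmentOf K V G B := ⟨hXG, S, hSB, rfl⟩
  have hY : Submodule.span K T ∈ apartmentOf K V G B := ⟨hYG, T, hTB, rfl⟩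
  set A := apartmentOf K V G B with hAdef
  set X := Submodule.span K S with hXdef
  set Y := Submodule.span K T with hYdef
  have hmemS : ∀ w ∈ B, (w ∈ X ↔ w ∈ S) := fun w hw => basis_mem_span_iff hB hSB hw
  have hmemT : ∀ w ∈ B, (w ∈ Y ↔ w ∈ T) := fun w hw => basis_mem_span_iff hB hTB hw
  have notin : ∀ {Z : Submodule K V} {b c : V}, Z ∈ A → Z ∉ Abc A b c →
      (b : V) ∈ Z ∧ c ∉ Z := by
    intro Z b c hZ hnot
    have : ¬((b : V) ∈ Z → c ∈ Z) := fun himp => hnot ⟨hZ, himp⟩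
    push_neg at this
    exact this
  obtain ⟨hne, ⟨M, N, hM, hN, hXM, hYN, hMN, hcond⟩,
    ⟨M₂, N₂, hM₂, hN₂, hXM₂, hYM₂, hYN₂, hXN₂, hQne⟩⟩ := h
  obtain ⟨b, hbB, c, hcB, hbc, rfl⟩ := (maxInexact_iff hα hβ1 hβ hG hB).1 hM
  obtain ⟨b1, hb1B, c1, hc1B, hb1c1, rfl⟩ := (maxInexact_iff hα hβ1 hβ hG hB).1 hN
  obtain ⟨b2, hb2B, c2, hc2B, hb2c2, rfl⟩ := (maxInexact_iff hα hβ1 hβ hG hB).1 hM₂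
  obtain ⟨b3, hb3B, c3, hc3B, hb3c3, rfl⟩ := (maxInexact_iff hα hβ1 hβ hG hB).1 hN₂
  obtain ⟨hbX, hcX⟩ := notin hX hXM
  obtain ⟨hb1Y, hc1Y⟩ := notin hY hYN
  obtain ⟨hb2X, hc2X⟩ := notin hX hXM₂
  obtain ⟨hb3Y, hc3Y⟩ := notin hY hYN₂
  have himpY2 : (b2 : V) ∈ Y → c2 ∈ Y := hYM₂.2
  have himpX3 : (b3 : V) ∈ X → c3 ∈ X := hXN₂.2
  obtain ⟨Z₀, hZ₀1, hZ₀2⟩ := hQne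
  obtain ⟨-, hb2Z₀, hc2Z₀⟩ := mem_diff_abc.1 hZ₀1
  obtain ⟨-, hb3Z₀, hc3Z₀⟩ := mem_diff_abc.1 hZ₀2
  have hb2c3 : b2 ≠ c3 := fun h => hc3Z₀ (h ▸ hb2Z₀)
  have hb3c2 : b3 ≠ c2 := fun h => hc2Z₀ (h ▸ hb3Z₀)
  -- the key consequence of the ∀-condition in P
  have hcond2 : ∀ d e : V, d ∈ B → e ∈ B → d ≠ e → d ≠ c → d ≠ c1 → e ≠ b → e ≠ b1 →
      ((d ∈ X ∧ e ∉ X) ↔ (d ∈ Y ∧ e ∉ Y)) := by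
    intro d e hdB heB hde hdc hdc1 heb heb1
    have hne1 : ((A \ Abc A d e) ∩ (A \ Abc A b c)).Nonempty := by
      obtain ⟨Z, hZA, h1, h2, h3, h4⟩ := exists_elem_mem hα hβ1 hβ hG hB hdB hbB heB hcB
        hde hdc (fun hx => heb hx.symm) hbc
      exact ⟨Z, mem_diff_abc.2 ⟨hZA, h1, h3⟩, mem_diff_abc.2 ⟨hZA, h2, h4⟩⟩
    have hne2 : ((A \ Abc A d e) ∩ (A \ Abc A b1 c1)).Nonempty := by
      obtain ⟨Z, hZA, h1, h2, h3, h4⟩ := exists_elem_mem hα hβ1 hβ hG hB hdB hb1B heB hc1B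
        hde hdc1 (fun hx => heb1 hx.symm) hb1c1
      exact ⟨Z, mem_diff_abc.2 ⟨hZA, h1, h3⟩, mem_diff_abc.2 ⟨hZA, h2, h4⟩⟩
    have hL := hcond (Abc A d e)
      ((maxInexact_iff hα hβ1 hβ hG hB).2 ⟨d, hdB, e, heB, hde, rfl⟩) hne1 hne2
    rw [mem_abc_iff hX, mem_abc_iff hY] at hL
    constructor
    · rintro ⟨h1, h2⟩
      by_cases h3 : (d : V) ∈ Y
      · refine ⟨h3, fun h4 => ?_⟩
        exact h2 (hL.2 (fun _ => h4) h1)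
      · exact absurd (hL.2 (fun h4 => absurd h4 h3) h1) h2
    · rintro ⟨h1, h2⟩
      by_cases h3 : (d : V) ∈ X
      · refine ⟨h3, fun h4 => ?_⟩
        exact h2 (hL.1 (fun _ => h4) h1)
      · exact absurd (hL.1 (fun h4 => absurd h4 h3) h1) h2
  -- X and Y agree away from b, c, b1, c1
  have hagree : ∀ d ∈ B, d ≠ b → d ≠ c → d ≠ b1 → d ≠ c1 → (d ∈ X ↔ d ∈ Y) := by
    intro d hdB hdb hdc hdb1 hdc1
    rcases elem_dichotomy hα hG hB with hdi | hdi
    · constructor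
      · intro hdX
        obtain ⟨e, heBX, heb, heb1, hed⟩ := exists_avoid (hdi _ hX) b b1 d
        exact ((hcond2 d e hdB heBX.1 (fun hx => hed hx.symm) hdc hdc1 heb heb1).1
          ⟨hdX, heBX.2⟩).1
      · intro hdY
        obtain ⟨e, heBY, heb, heb1, hed⟩ := exists_avoid (hdi _ hY) b b1 d
        exact ((hcond2 d e hdB heBY.1 (fun hx => hed hx.symm) hdc hdc1 heb heb1).2
          ⟨hdY, heBY.2⟩).1
    · constructor
      · intro hdX
        obtain ⟨e, heBY, hec, hec1, hed⟩ := exists_avoid (hdi _ hY) c c1 d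
        by_contra hdY
        have := (hcond2 e d heBY.1 hdB (fun hx => hed hx) hec hec1 hdb hdb1).2
          ⟨heBY.2, hdY⟩
        exact this.2 hdX
      · intro hdY
        obtain ⟨e, heBX, hec, hec1, hed⟩ := exists_avoid (hdi _ hX) c c1 d
        by_contra hdX
        have := (hcond2 e d heBX.1 hdB (fun hx => hed hx) hec hec1 hdb hdb1).1
          ⟨heBX.2, hdX⟩
        exact this.2 hdY
  -- S \ T ⊆ {c1}
  have hK1 : ∀ w ∈ S \ T, w = c1 := by
    rintro w ⟨hwS, hwT⟩
    have hwB : w ∈ B := hSB hwS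
    have hwX : w ∈ X := Submodule.subset_span hwS
    have hwY : w ∉ Y := fun h => hwT ((hmemT w hwB).1 h)
    have hwc : w ≠ c := fun h => hcX (h ▸ hwX)
    have hwb1 : w ≠ b1 := fun h => hwY (h ▸ hb1Y)
    by_cases hwc1 : w = c1
    · exact hwc1
    have hwb : w = b := by
      by_contra hwb
      exact hwY ((hagree w hwB hwb hwc hwb1 hwc1).1 hwX)
    subst hwb
    -- now w = b with b ≠ c1 : contradiction
    exfalso
    obtain ⟨hXc2, -⟩ := elem_two_le hα hβ1 hG hB hX
    obtain ⟨-, hXc⟩ := elem_two_le hα hβ1 hG hB hX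
    obtain ⟨e, heBX, heb1⟩ := exists_ne_of_two_le hXc b1
    have heB : e ∈ B := heBX.1
    have heX : e ∉ X := heBX.2
    have hbe : w ≠ e := fun h => heX (h ▸ hwX)
    have heb : e ≠ w := fun h => heX (h ▸ hwX)
    exact hwY ((hcond2 w e hwB heB hbe hwc hwc1 heb heb1).1 ⟨hwX, heX⟩).1
  -- T \ S ⊆ {c}
  have hK2 : ∀ w ∈ T \ S, w = c := by
    rintro w ⟨hwT, hwS⟩
    have hwB : w ∈ B := hTB hwT
    have hwY : w ∈ Y := Submodule.subset_span hwT
    have hwX : w ∉ X := fun h => hwS ((hmemS w hwB).1 h)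
    have hwc1 : w ≠ c1 := fun h => hc1Y (h ▸ hwY)
    have hwb : w ≠ b := fun h => hwX (h ▸ hbX)
    by_cases hwc : w = c
    · exact hwc
    have hwb1 : w = b1 := by
      by_contra hwb1
      exact hwX ((hagree w hwB hwb hwc hwb1 hwc1).2 hwY)
    subst hwb1
    exfalso
    obtain ⟨-, hYc⟩ := elem_two_le hα hβ1 hG hB hY
    obtain ⟨e, heBY, heb⟩ := exists_ne_of_two_le hYc b
    have heB : e ∈ B := heBY.1
    have heY : e ∉ Y := heBY.2
    have hbe : w ≠ e := fun h => heY (h ▸ hwY)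
    have heb1 : e ≠ w := fun h => heY (h ▸ hwY)
    exact hwX ((hcond2 w e hwB heB hbe hwc hwc1 heb heb1).2 ⟨hwY, heY⟩).1
  -- S \ T is nonempty
  have hSTne : (S \ T).Nonempty := by
    by_contra hempty
    rw [Set.not_nonempty_iff_eq_empty, Set.diff_eq_empty] at hempty
    have hb2S : b2 ∈ S := (hmemS b2 hb2B).1 hb2X
    have hb2Y : (b2 : V) ∈ Y := Submodule.subset_span (hempty hb2S)
    have hc2Y : (c2 : V) ∈ Y := himpY2 hb2Y
    have hc2T : c2 ∈ T := (hmemT c2 hc2B).1 hc2Y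
    have hc2S : c2 ∉ S := fun hh => hc2X (Submodule.subset_span hh)
    have hb3S : b3 ∉ S := by
      intro hh
      have hc3X : (c3 : V) ∈ X := himpX3 (Submodule.subset_span hh)
      have hc3S : c3 ∈ S := (hmemS c3 hc3B).1 hc3X
      exact hc3Y (Submodule.subset_span (hempty hc3S))
    have hb3T : b3 ∈ T := (hmemT b3 hb3B).1 hb3Y
    have h1 : c2 = c := hK2 c2 ⟨hc2T, hc2S⟩
    have h2 : b3 = c := hK2 b3 ⟨hb3T, hb3S⟩
    exact hb3c2 (h2.trans h1.symm)
  -- T \ S is nonempty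
  have hTSne : (T \ S).Nonempty := by
    by_contra hempty
    rw [Set.not_nonempty_iff_eq_empty, Set.diff_eq_empty] at hempty
    have hb3T : b3 ∈ T := (hmemT b3 hb3B).1 hb3Y
    have hb3X : (b3 : V) ∈ X := Submodule.subset_span (hempty hb3T)
    have hc3X : (c3 : V) ∈ X := himpX3 hb3X
    have hc3S : c3 ∈ S := (hmemS c3 hc3B).1 hc3X
    have hc3T : c3 ∉ T := fun hh => hc3Y (Submodule.subset_span hh)
    have hb2T : b2 ∉ T := by
      intro hh
      have hc2Y : (c2 : V) ∈ Y := himpY2 (Submodule.subset_span hh)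
      have hc2T : c2 ∈ T := (hmemT c2 hc2B).1 hc2Y
      exact hc2X (Submodule.subset_span (hempty hc2T))
    have hb2S : b2 ∈ S := (hmemS b2 hb2B).1 hb2X
    have h1 : c3 = c1 := hK1 c3 ⟨hc3S, hc3T⟩
    have h2 : b2 = c1 := hK1 b2 ⟨hb2S, hb2T⟩
    exact hb2c3 (h2.trans h1.symm)
  -- conclude
  apply (adjacent_span_iff hB hSB hTB).2
  constructor
  · obtain ⟨w, hw⟩ := hSTne
    refine ⟨w, Set.Subset.antisymm (fun z hz => ?_) (fun z hz => ?_)⟩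
    · rw [Set.mem_singleton_iff, hK1 z hz, ← hK1 w hw]
    · rw [Set.mem_singleton_iff] at hz
      exact hz ▸ hw
  · obtain ⟨w, hw⟩ := hTSne
    refine ⟨w, Set.Subset.antisymm (fun z hz => ?_) (fun z hz => ?_)⟩
    · rw [Set.mem_singleton_iff, hK2 z hz, ← hK2 w hw]
    · rw [Set.mem_singleton_iff] at hz
      exact hz ▸ hw

end Converse

section Transfer

variable {β : Cardinal.{v}} {G : Set (Submodule K V)} {B B' : Set V}
variable {g g' : Submodule K V → Submodule K V}

lemma maxInexact_image (hα : Cardinal.aleph0 ≤ Module.rank K V)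
    (hβ1 : 1 < β) (hβ : β ≤ Module.rank K V)
    (hG : G = Gsub K V β ∨ G = Gsup K V β)
    (hB : IsBasisSet K V B) (hB' : IsBasisSet K V B')
    (hbij : Set.BijOn g (apartmentOf K V G B) (apartmentOf K V G B'))
    (hinv : Set.InvOn g' g (apartmentOf K V G B) (apartmentOf K V G B'))
    (hsp : ∀ X ⊆ apartmentOf K V G B, Inexact K V G (apartmentOf K V G B) X →
      Inexact K V G (apartmentOf K V G B') (g '' X))
    (hsp' : ∀ Y ⊆ apartmentOf K V G B', Inexact K V G (apartmentOf K V G B') Y →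
      Inexact K V G (apartmentOf K V G B) (g' '' Y))
    {M : Set (Submodule K V)} (hM : MaxInexact G (apartmentOf K V G B) M) :
    MaxInexact G (apartmentOf K V G B') (g '' M) ∧ g' '' (g '' M) = M := by
  set A := apartmentOf K V G B with hAdef
  set A' := apartmentOf K V G B' with hA'def
  have hgg' : ∀ s ⊆ A, g' '' (g '' s) = s := by
    intro s hs
    ext x
    constructor
    · rintro ⟨y, ⟨z, hz, rfl⟩, rfl⟩
      rwa [hinv.1 (hs hz)]
    · intro hx
      exact ⟨g x, ⟨x, hx, rfl⟩, hinv.1 (hs hx)⟩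
  have hg'g : ∀ s ⊆ A', g '' (g' '' s) = s := by
    intro s hs
    ext x
    constructor
    · rintro ⟨y, ⟨z, hz, rfl⟩, rfl⟩
      rwa [hinv.2 (hs hz)]
    · intro hx
      exact ⟨g' x, ⟨x, hx, rfl⟩, hinv.2 (hs hx)⟩
  have h1 : g '' M ⊆ A' := (Set.image_mono (f := g) hM.1).trans hbij.image_eq.le
  have h2 : Inexact K V G A' (g '' M) := hsp M hM.1 hM.2.1
  obtain ⟨b', hb'B', c', hc'B', hb'c', habc'⟩ := inexact_subset_abc hα hG hB' h1 h2
  have hAbc'A' : Abc A' b' c' ⊆ A' := Set.sep_subset _ _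
  have h3 : g' '' (Abc A' b' c') ⊆ A := by
    have hbij' : Set.BijOn g' A' A := Set.BijOn.symm hinv.symm hbij
    exact (Set.image_mono (f := g') hAbc'A').trans hbij'.image_eq.le
  have h4 : Inexact K V G A (g' '' (Abc A' b' c')) :=
    hsp' _ hAbc'A' (abc_inexact hα hβ1 hβ hG hB' hb'B' hc'B' hb'c')
  obtain ⟨d, hdB, e, heB, hde, habc⟩ := inexact_subset_abc hα hG hB h3 h4
  have hMsub : M ⊆ Abc A d e := by
    calc M = g' '' (g '' M) := (hgg' M hM.1).symm
      _ ⊆ g' '' (Abc A' b' c') := Set.image_mono (f := g') habc'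
      _ ⊆ Abc A d e := habc
  have hMeq : Abc A d e = M := hM.2.2 _ hMsub (Set.sep_subset _ _)
    (abc_inexact hα hβ1 hβ hG hB hdB heB hde)
  have hsub2 : M ⊆ g' '' (Abc A' b' c') := by
    calc M = g' '' (g '' M) := (hgg' M hM.1).symm
      _ ⊆ g' '' (Abc A' b' c') := Set.image_mono (f := g') habc'
  have hEq2 : g' '' (Abc A' b' c') = M := Set.Subset.antisymm (hMeq ▸ habc) hsub2
  have hgM : g '' M = Abc A' b' c' := by
    rw [← hEq2, hg'g _ hAbc'A']
  constructor
  · rw [hgM]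
    exact (maxInexact_iff hα hβ1 hβ hG hB').2 ⟨b', hb'B', c', hc'B', hb'c', rfl⟩
  · rw [hgM, hEq2]

end Transfer

section Transfer2

variable {β : Cardinal.{v}} {G : Set (Submodule K V)} {B B' : Set V}
variable {g g' : Submodule K V → Submodule K V}

lemma adjR_transfer (hα : Cardinal.aleph0 ≤ Module.rank K V)
    (hβ1 : 1 < β) (hβ : β ≤ Module.rank K V)
    (hG : G = Gsub K V β ∨ G = Gsup K V β)
    (hB : IsBasisSet K V B) (hB' : IsBasisSet K V B')
    (hbij : Set.BijOn g (apartmentOf K V G B) (apartmentOf K V G B'))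
    (hinv : Set.InvOn g' g (apartmentOf K V G B) (apartmentOf K V G B'))
    (hsp : ∀ X ⊆ apartmentOf K V G B, Inexact K V G (apartmentOf K V G B) X →
      Inexact K V G (apartmentOf K V G B') (g '' X))
    (hsp' : ∀ Y ⊆ apartmentOf K V G B', Inexact K V G (apartmentOf K V G B') Y →
      Inexact K V G (apartmentOf K V G B) (g' '' Y))
    {X Y : Submodule K V} (hXA : X ∈ apartmentOf K V G B) (hYA : Y ∈ apartmentOf K V G B)
    (hR : AdjR G (apartmentOf K V G B) X Y) :
    AdjR G (apartmentOf K V G B') (g X) (g Y) := by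
  set A := apartmentOf K V G B with hAdef
  set A' := apartmentOf K V G B' with hA'def
  have hbij' : Set.BijOn g' A' A := Set.BijOn.symm hinv.symm hbij
  have hmem : ∀ {Z : Submodule K V} {s : Set (Submodule K V)}, Z ∈ A → s ⊆ A →
      (g Z ∈ g '' s ↔ Z ∈ s) := by
    intro Z s hZ hs
    constructor
    · rintro ⟨m, hm, he⟩
      exact (hbij.injOn (hs hm) hZ he) ▸ hm
    · intro h
      exact ⟨Z, h, rfl⟩
  have hdiffim : ∀ s ⊆ A, g '' (A \ s) = A' \ g '' s := by
    intro s hs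
    rw [hbij.injOn.image_diff, hbij.image_eq, Set.inter_eq_self_of_subset_right hs]
  have hinterim : ∀ s t : Set (Submodule K V), s ⊆ A → t ⊆ A →
      g '' (s ∩ t) = g '' s ∩ g '' t := fun s t hs ht => hbij.injOn.image_inter hs ht
  obtain ⟨hneq, ⟨M, N, hM, hN, hXM, hYN, hMN, hcond⟩,
    ⟨M₂, N₂, hM₂, hN₂, hXM₂, hYM₂, hYN₂, hXN₂, hQne⟩⟩ := hR
  have T1M := maxInexact_image hα hβ1 hβ hG hB hB' hbij hinv hsp hsp' hM
  have T1N := maxInexact_image hα hβ1 hβ hG hB hB' hbij hinv hsp hsp' hN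
  have T1M₂ := maxInexact_image hα hβ1 hβ hG hB hB' hbij hinv hsp hsp' hM₂
  have T1N₂ := maxInexact_image hα hβ1 hβ hG hB hB' hbij hinv hsp hsp' hN₂
  refine ⟨fun h => hneq (hbij.injOn hXA hYA h), ?_, ?_⟩
  · refine ⟨g '' M, g '' N, T1M.1, T1N.1,
      fun h => hXM ((hmem hXA hM.1).1 h), fun h => hYN ((hmem hYA hN.1).1 h), ?_, ?_⟩
    · rw [← hdiffim M hM.1, ← hdiffim N hN.1,
        ← hinterim _ _ Set.diff_subset Set.diff_subset, hMN, Set.image_empty]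
    · intro L' hL' hne1 hne2
      have T1L := maxInexact_image hα hβ1 hβ hG hB' hB hbij' hinv.symm hsp' hsp hL'
      set L : Set (Submodule K V) := g' '' L' with hLdef
      have hLA : L ⊆ A := T1L.1.1
      have hgL : g '' L = L' := T1L.2
      have hn1 : ((A \ L) ∩ (A \ M)).Nonempty := by
        rw [← hgL] at hne1
        rw [← hdiffim L hLA, ← hdiffim M hM.1,
          ← hinterim _ _ Set.diff_subset Set.diff_subset] at hne1
        exact Set.Nonempty.of_image hne1
      have hn2 : ((A \ L) ∩ (A \ N)).Nonempty := by
        rw [← hgL] at hne2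
        rw [← hdiffim L hLA, ← hdiffim N hN.1,
          ← hinterim _ _ Set.diff_subset Set.diff_subset] at hne2
        exact Set.Nonempty.of_image hne2
      have hiff := hcond L T1L.1 hn1 hn2
      rw [← hgL, hmem hXA hLA, hmem hYA hLA]
      exact hiff
  · refine ⟨g '' M₂, g '' N₂, T1M₂.1, T1N₂.1,
      fun h => hXM₂ ((hmem hXA hM₂.1).1 h), ⟨Y, hYM₂, rfl⟩,
      fun h => hYN₂ ((hmem hYA hN₂.1).1 h), ⟨X, hXN₂, rfl⟩, ?_⟩
    rw [← hdiffim M₂ hM₂.1, ← hdiffim N₂ hN₂.1,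
      ← hinterim _ _ Set.diff_subset Set.diff_subset]
    exact hQne.image g

end Transfer2

/-- Lemma 2, first part: a special bijection between apartments of `G` is adjacency
preserving in both directions. -/
theorem stmt7 (hα : Cardinal.aleph0 ≤ Module.rank K V)
    (β : Cardinal.{v}) (hβ1 : 1 < β) (hβ : β ≤ Module.rank K V)
    (G : Set (Submodule K V)) (hG : G = Gsub K V β ∨ G = Gsup K V β)
    (A A' : Set (Submodule K V))
    (hA : IsApartment K V G A) (hA' : IsApartment K V G A')
    (g g' : Submodule K V → Submodule K V)
    (hbij : Set.BijOn g A A') (hinv : Set.InvOn g' g A A')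
    (hsp : ∀ X ⊆ A, Inexact K V G A X → Inexact K V G A' (g '' X))
    (hsp' : ∀ Y ⊆ A', Inexact K V G A' Y → Inexact K V G A (g' '' Y)) :
    ∀ X ∈ A, ∀ Y ∈ A, (AdjacentSub K V X Y ↔ AdjacentSub K V (g X) (g Y)) := by
  obtain ⟨B, hB, rfl⟩ := hA
  obtain ⟨B', hB', rfl⟩ := hA'
  intro X hXA Y hYA
  have hgX : g X ∈ apartmentOf K V G B' := hbij.mapsTo hXA
  have hgY : g Y ∈ apartmentOf K V G B' := hbij.mapsTo hYA
  have hbij' : Set.BijOn g' (apartmentOf K V G B') (apartmentOf K V G B) :=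
    Set.BijOn.symm hinv.symm hbij
  constructor
  · intro hadj
    exact adjacent_of_adjR hα hβ1 hβ hG hB' hgX hgY
      (adjR_transfer hα hβ1 hβ hG hB hB' hbij hinv hsp hsp' hXA hYA
        (adjR_of_adjacent hα hβ1 hβ hG hB hXA hYA hadj))
  · intro hadj'
    have h1 := adjR_of_adjacent hα hβ1 hβ hG hB' hgX hgY hadj'
    have h2 := adjR_transfer hα hβ1 hβ hG hB' hB hbij' hinv.symm hsp' hsp hgX hgY h1
    rw [hinv.1 hXA, hinv.1 hYA] at h2
    exact adjacent_of_adjR hα hβ1 hβ hG hB hXA hYA h2
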